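/- (Theorem 2, identity form via equation (2).) Let H(x,y) = ((1−x)²(1−y)²(1−x²)(1−y²)(1−xy)²(1−x²y)(1−xy²))^{-1} ∈ ℚ[[x,y]] and let W(t,v) = (h₃(v)t³+h₂(v)t²+h₁(v)t+h₀(v))·((1−v)⁷(1+v)⁴(1+v²)(1−t)³(1+t)(1−vt))^{-1} ∈ ℚ[[t,v]], where h₃(v) = v²(v⁴−v³+3v²−v+1), h₂(v) = v(2v⁴−4v³+v²−v−1), h₁(v) = v(−v⁴−v³+v²−4v+2), h₀(v) = v⁴−v³+3v²−v+1. Then in ℚ[[x,y]]: (x − y)·H(x,y) = x·W(x,xy) − y·W(y,xy), where W(x,xy) and W(y,xy) denote substitution of t := x (resp. t := y) and v := xy into W. -/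

import Mathlib

open Finset

abbrev Q2 : Type := MvPowerSeries (Fin 2) ℚ

noncomputable def Xv (i : Fin 2) : Q2 := MvPowerSeries.X i

noncomputable def mon (i j : ℕ) : Fin 2 →₀ ℕ := Finsupp.single 0 i + Finsupp.single 1 j

noncomputable def c (i j : ℕ) (f : Q2) : ℚ := MvPowerSeries.coeff (mon i j) f

/-- Schur function S_{(l1,l2)}(x,y) for l1 ≥ l2. -/
noncomputable def schur (l1 l2 : ℕ) : Q2 :=
  (Xv 0 * Xv 1) ^ l2 * ∑ i ∈ range (l1 - l2 + 1), Xv 0 ^ i * Xv 1 ^ (l1 - l2 - i)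

/-- f = Σ_{l1 ≥ l2 ≥ 0} m(l1,l2) · S_{(l1,l2)}, expressed coefficientwise
(each coefficient receives only finitely many contributions, since `schur l1 l2`
is homogeneous of degree `l1 + l2`). -/
def IsSchurExpansion (m : ℕ → ℕ → ℚ) (f : Q2) : Prop :=
  ∀ i j : ℕ, c i j f =
    ∑ l1 ∈ range (i + j + 1), ∑ l2 ∈ range (l1 + 1), m l1 l2 * c i j (schur l1 l2)

/-- h(t,v) = Σ_{l1 ≥ l2 ≥ 0} m(l1,l2) t^{l1-l2} v^{l2}, the multiplicity series. -/
def IsMultSeries (m : ℕ → ℕ → ℚ) (h : Q2) : Prop :=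
  ∀ p q : ℕ, c p q h = m (p + q) q

/-- Substitution of φ0, φ1 (series with zero constant term) for the two variables of h:
the coefficient of a monomial e in h(φ0,φ1) only receives contributions from monomials
t^p v^q of h with p + q ≤ |e|. -/
noncomputable def subst2 (φ0 φ1 h : Q2) : Q2 :=
  fun e => ∑ p ∈ range (e 0 + e 1 + 1), ∑ q ∈ range (e 0 + e 1 + 1),
    MvPowerSeries.coeff (mon p q) h * MvPowerSeries.coeff e (φ0 ^ p * φ1 ^ q)

/-- Substitution of a series φ with zero constant term into a one-variable series a. -/
noncomputable def substP (φ : Q2) (a : PowerSeries ℚ) : Q2 :=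
  fun e => ∑ k ∈ range (e 0 + e 1 + 1),
    PowerSeries.coeff k a * MvPowerSeries.coeff e (φ ^ k)

/-- Hilbert series of the mixed trace algebra T₂ of two generic 3×3 matrices
(Berele–Stembridge), with x = Xv 0, y = Xv 1. -/
noncomputable def Hseries : Q2 :=
  ((1 - Xv 0) ^ 2 * (1 - Xv 1) ^ 2 * (1 - Xv 0 ^ 2) * (1 - Xv 1 ^ 2)
    * (1 - Xv 0 * Xv 1) ^ 2 * (1 - Xv 0 ^ 2 * Xv 1) * (1 - Xv 0 * Xv 1 ^ 2))⁻¹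

/-- W(t,v), the multiplicity series of Theorem 2, with t = Xv 0, v = Xv 1;
h₃(v) = v²(v⁴−v³+3v²−v+1), h₂(v) = v(2v⁴−4v³+v²−v−1),
h₁(v) = v(−v⁴−v³+v²−4v+2), h₀(v) = v⁴−v³+3v²−v+1. -/
noncomputable def Wseries : Q2 :=
  (Xv 1 ^ 2 * (Xv 1 ^ 4 - Xv 1 ^ 3 + 3 * Xv 1 ^ 2 - Xv 1 + 1) * Xv 0 ^ 3
    + Xv 1 * (2 * Xv 1 ^ 4 - 4 * Xv 1 ^ 3 + Xv 1 ^ 2 - Xv 1 - 1) * Xv 0 ^ 2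
    + Xv 1 * (-Xv 1 ^ 4 - Xv 1 ^ 3 + Xv 1 ^ 2 - 4 * Xv 1 + 2) * Xv 0
    + (Xv 1 ^ 4 - Xv 1 ^ 3 + 3 * Xv 1 ^ 2 - Xv 1 + 1))
  * ((1 - Xv 1) ^ 7 * (1 + Xv 1) ^ 4 * (1 + Xv 1 ^ 2)
      * (1 - Xv 0) ^ 3 * (1 + Xv 0) * (1 - Xv 1 * Xv 0))⁻¹


section Aux

open MvPowerSeries
open scoped Classical

lemma mon_apply0 (i j : ℕ) : (mon i j) 0 = i := by
  simp [mon, Finsupp.single_apply]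

lemma mon_apply1 (i j : ℕ) : (mon i j) 1 = j := by
  simp [mon, Finsupp.single_apply]

lemma eq_mon (e : Fin 2 →₀ ℕ) : e = mon (e 0) (e 1) := by
  ext a
  fin_cases a <;> simp [mon, Finsupp.single_apply]

noncomputable def reindex (f : (Fin 2 →₀ ℕ) → (Fin 2 →₀ ℕ)) (g : Q2) : Q2 :=
  fun e => if h : ∃ d, f d = e then MvPowerSeries.coeff h.choose g else 0

variable {f : (Fin 2 →₀ ℕ) → (Fin 2 →₀ ℕ)}

lemma coeff_reindex (g : Q2) (e : Fin 2 →₀ ℕ) :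
    MvPowerSeries.coeff e (reindex f g)
      = if h : ∃ d, f d = e then MvPowerSeries.coeff h.choose g else 0 := rfl

lemma coeff_reindex_apply (hinj : Function.Injective f) (g : Q2) (d : Fin 2 →₀ ℕ) :
    MvPowerSeries.coeff (f d) (reindex f g) = MvPowerSeries.coeff d g := by
  rw [coeff_reindex, dif_pos ⟨d, rfl⟩]
  have h := hinj (Exists.choose_spec (⟨d, rfl⟩ : ∃ d', f d' = f d))
  rw [h]

lemma coeff_reindex_of_notMem (g : Q2) {e : Fin 2 →₀ ℕ} (he : ¬ ∃ d, f d = e) :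
    MvPowerSeries.coeff e (reindex f g) = 0 := dif_neg he

lemma reindex_zero : reindex f (0 : Q2) = 0 := by
  apply MvPowerSeries.ext
  intro e
  rw [coeff_reindex]
  split <;> simp

lemma reindex_add (a b : Q2) : reindex f (a + b) = reindex f a + reindex f b := by
  apply MvPowerSeries.ext
  intro e
  rw [map_add, coeff_reindex, coeff_reindex, coeff_reindex]
  by_cases he : ∃ d, f d = e
  · rw [dif_pos he, dif_pos he, dif_pos he, map_add]
  · rw [dif_neg he, dif_neg he, dif_neg he, add_zero]

lemma reindex_one (hinj : Function.Injective f) (hadd : ∀ a b, f (a + b) = f a + f b) :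
    reindex f (1 : Q2) = 1 := by
  have h0 : f 0 = 0 := by
    have := hadd 0 0
    rw [zero_add] at this
    exact (left_eq_add.mp this)
  apply MvPowerSeries.ext
  intro e
  rw [MvPowerSeries.coeff_one]
  by_cases he : ∃ d, f d = e
  · obtain ⟨d, rfl⟩ := he
    rw [coeff_reindex_apply hinj, MvPowerSeries.coeff_one]
    by_cases hd : d = 0
    · subst hd; rw [if_pos rfl, if_pos h0]
    · rw [if_neg hd, if_neg (fun h => hd (hinj (h.trans h0.symm)))]
  · rw [coeff_reindex_of_notMem _ he, if_neg (fun h => he ⟨0, h0.trans h.symm⟩)]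

lemma reindex_mul (hinj : Function.Injective f) (hadd : ∀ a b, f (a + b) = f a + f b)
    (a b : Q2) : reindex f (a * b) = reindex f a * reindex f b := by
  apply MvPowerSeries.ext
  intro e
  rw [MvPowerSeries.coeff_mul]
  by_cases he : ∃ d, f d = e
  · obtain ⟨d, rfl⟩ := he
    rw [coeff_reindex_apply hinj, MvPowerSeries.coeff_mul]
    refine Finset.sum_bij_ne_zero (fun p _ _ => (f p.1, f p.2)) ?_ ?_ ?_ ?_
    · intro p hp _
      rw [Finset.HasAntidiagonal.mem_antidiagonal] at hp ⊢
      rw [← hadd, hp]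
    · intro p _ _ q _ _ hpq
      exact Prod.ext (hinj (congrArg Prod.fst hpq)) (hinj (congrArg Prod.snd hpq))
    · intro q hq hne
      have hu : ∃ d1, f d1 = q.1 := by
        by_contra h
        exact hne (by rw [coeff_reindex_of_notMem _ h, zero_mul])
      have hv : ∃ d2, f d2 = q.2 := by
        by_contra h
        exact hne (by rw [coeff_reindex_of_notMem _ h, mul_zero])
      obtain ⟨d1, h1⟩ := hu
      obtain ⟨d2, h2⟩ := hv
      have hmem : (d1, d2) ∈ Finset.HasAntidiagonal.antidiagonal d := by
        rw [Finset.HasAntidiagonal.mem_antidiagonal] at hq ⊢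
        exact hinj (by rw [hadd, h1, h2, hq])
      have hne' : MvPowerSeries.coeff d1 a * MvPowerSeries.coeff d2 b ≠ 0 := by
        rw [← coeff_reindex_apply hinj a d1, ← coeff_reindex_apply hinj b d2, h1, h2]
        exact hne
      exact ⟨(d1, d2), hmem, hne', Prod.ext h1 h2⟩
    · intro p _ _
      rw [coeff_reindex_apply hinj, coeff_reindex_apply hinj]
  · rw [coeff_reindex_of_notMem _ he]
    symm
    apply Finset.sum_eq_zero
    intro q hq
    by_contra hne
    have hu : ∃ d1, f d1 = q.1 := by
      by_contra h
      exact hne (by rw [coeff_reindex_of_notMem _ h, zero_mul])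
    have hv : ∃ d2, f d2 = q.2 := by
      by_contra h
      exact hne (by rw [coeff_reindex_of_notMem _ h, mul_zero])
    obtain ⟨d1, h1⟩ := hu
    obtain ⟨d2, h2⟩ := hv
    exact he ⟨d1 + d2, by rw [hadd, h1, h2, Finset.HasAntidiagonal.mem_antidiagonal.mp hq]⟩

lemma reindex_monomial (hinj : Function.Injective f) (d : Fin 2 →₀ ℕ) (r : ℚ) :
    reindex f (MvPowerSeries.monomial d r) = MvPowerSeries.monomial (f d) r := by
  apply MvPowerSeries.ext
  intro e
  by_cases he : ∃ d', f d' = e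
  · obtain ⟨d', rfl⟩ := he
    rw [coeff_reindex_apply hinj, MvPowerSeries.coeff_monomial, MvPowerSeries.coeff_monomial]
    by_cases h : d' = d
    · subst h; rw [if_pos rfl, if_pos rfl]
    · rw [if_neg h, if_neg (fun hh => h (hinj hh))]
  · rw [coeff_reindex_of_notMem _ he, MvPowerSeries.coeff_monomial,
      if_neg (fun hh => he ⟨d, hh.symm⟩)]

noncomputable def reindexHom (f : (Fin 2 →₀ ℕ) → (Fin 2 →₀ ℕ))
    (hinj : Function.Injective f) (hadd : ∀ a b, f (a + b) = f a + f b) : Q2 →+* Q2 where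
  toFun := reindex f
  map_one' := reindex_one hinj hadd
  map_mul' := reindex_mul hinj hadd
  map_zero' := reindex_zero (f := f)
  map_add' := reindex_add (f := f)

lemma reindexHom_apply (hinj : Function.Injective f) (hadd : ∀ a b, f (a + b) = f a + f b)
    (g : Q2) : reindexHom f hinj hadd g = reindex f g := rfl

/-- exponent map for the substitution t := x, v := xy -/
noncomputable def fxy (d : Fin 2 →₀ ℕ) : Fin 2 →₀ ℕ := mon (d 0 + d 1) (d 1)

/-- exponent map for the substitution t := y, v := xy -/
noncomputable def fyx (d : Fin 2 →₀ ℕ) : Fin 2 →₀ ℕ := mon (d 1) (d 0 + d 1)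

lemma fxy_inj : Function.Injective fxy := by
  intro a b h
  have h0 : fxy a 0 = fxy b 0 := by rw [h]
  have h1 : fxy a 1 = fxy b 1 := by rw [h]
  simp only [fxy, mon_apply0, mon_apply1] at h0 h1
  rw [eq_mon a, eq_mon b]
  have ha : a 0 = b 0 := by omega
  rw [ha, h1]

lemma fyx_inj : Function.Injective fyx := by
  intro a b h
  have h0 : fyx a 0 = fyx b 0 := by rw [h]
  have h1 : fyx a 1 = fyx b 1 := by rw [h]
  simp only [fyx, mon_apply0, mon_apply1] at h0 h1
  rw [eq_mon a, eq_mon b]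
  have ha : a 0 = b 0 := by omega
  rw [ha, h0]

lemma fxy_add : ∀ a b : Fin 2 →₀ ℕ, fxy (a + b) = fxy a + fxy b := by
  intro a b
  ext i
  fin_cases i <;>
    simp [fxy, mon, Finsupp.single_apply, Finsupp.add_apply] <;> ring

lemma fyx_add : ∀ a b : Fin 2 →₀ ℕ, fyx (a + b) = fyx a + fyx b := by
  intro a b
  ext i
  fin_cases i <;>
    simp [fyx, mon, Finsupp.single_apply, Finsupp.add_apply] <;> ring

lemma monomial_one_pow (m : Fin 2 →₀ ℕ) (p : ℕ) :
    (MvPowerSeries.monomial m (1 : ℚ)) ^ p = MvPowerSeries.monomial (p • m) (1 : ℚ) := by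
  induction p with
  | zero => simp
  | succ n ih =>
      rw [pow_succ, ih, MvPowerSeries.monomial_mul_monomial, one_mul, succ_nsmul]

lemma Xv_eq (i : Fin 2) : Xv i = MvPowerSeries.monomial (Finsupp.single i 1) 1 := by
  rw [Xv, MvPowerSeries.X_def]

lemma fxy_mon (p q : ℕ) :
    fxy (mon p q) = p • Finsupp.single 0 1 + q • (Finsupp.single 0 1 + Finsupp.single 1 1) := by
  ext i
  fin_cases i <;> simp [fxy, mon, Finsupp.single_apply]

lemma fyx_mon (p q : ℕ) :
    fyx (mon p q) = p • Finsupp.single 1 1 + q • (Finsupp.single 0 1 + Finsupp.single 1 1) := by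
  ext i
  fin_cases i <;> simp [fyx, mon, Finsupp.single_apply]

lemma pow_mul_pow_xy (p q : ℕ) :
    Xv 0 ^ p * (Xv 0 * Xv 1) ^ q = MvPowerSeries.monomial (fxy (mon p q)) 1 := by
  rw [Xv_eq 0, Xv_eq 1, MvPowerSeries.monomial_mul_monomial, one_mul, monomial_one_pow,
    monomial_one_pow, MvPowerSeries.monomial_mul_monomial, one_mul, fxy_mon]

lemma pow_mul_pow_yx (p q : ℕ) :
    Xv 1 ^ p * (Xv 0 * Xv 1) ^ q = MvPowerSeries.monomial (fyx (mon p q)) 1 := by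
  rw [Xv_eq 0, Xv_eq 1, MvPowerSeries.monomial_mul_monomial, one_mul, monomial_one_pow,
    monomial_one_pow, MvPowerSeries.monomial_mul_monomial, one_mul, fyx_mon]

lemma subst2_eq_reindex (φ0 φ1 : Q2) (hinj : Function.Injective f)
    (hmon : ∀ p q : ℕ, φ0 ^ p * φ1 ^ q = MvPowerSeries.monomial (f (mon p q)) 1)
    (hb : ∀ d : Fin 2 →₀ ℕ, d 0 < (f d) 0 + (f d) 1 + 1 ∧ d 1 < (f d) 0 + (f d) 1 + 1)
    (h : Q2) : subst2 φ0 φ1 h = reindex f h := by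
  apply MvPowerSeries.ext
  intro e
  show (∑ p ∈ range (e 0 + e 1 + 1), ∑ q ∈ range (e 0 + e 1 + 1),
    MvPowerSeries.coeff (mon p q) h * MvPowerSeries.coeff e (φ0 ^ p * φ1 ^ q)) = _
  simp only [hmon, MvPowerSeries.coeff_monomial]
  rw [← Finset.sum_product']
  by_cases he : ∃ d, f d = e
  · obtain ⟨d, rfl⟩ := he
    rw [coeff_reindex_apply hinj]
    have hd : mon (d 0) (d 1) = d := (eq_mon d).symm
    rw [Finset.sum_eq_single_of_mem (d 0, d 1)]
    · rw [hd, if_pos rfl, mul_one]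
    · exact Finset.mem_product.mpr
        ⟨Finset.mem_range.mpr (hb d).1, Finset.mem_range.mpr (hb d).2⟩
    · intro pq _ hne
      rw [if_neg, mul_zero]
      intro hEq
      apply hne
      have hdd : d = mon pq.1 pq.2 := hinj hEq
      have h0 : pq.1 = d 0 := by rw [hdd, mon_apply0]
      have h1 : pq.2 = d 1 := by rw [hdd, mon_apply1]
      exact Prod.ext h0 h1
  · rw [coeff_reindex_of_notMem _ he]
    apply Finset.sum_eq_zero
    intro pq _
    rw [if_neg (fun hEq => he ⟨mon pq.1 pq.2, hEq.symm⟩), mul_zero]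

lemma fxy_single0 : fxy (Finsupp.single 0 1) = Finsupp.single 0 1 := by
  ext i
  fin_cases i <;> simp [fxy, mon, Finsupp.single_apply]

lemma fyx_single0 : fyx (Finsupp.single 0 1) = Finsupp.single 1 1 := by
  ext i
  fin_cases i <;> simp [fyx, mon, Finsupp.single_apply]

lemma Rxy_X0 : reindexHom fxy fxy_inj fxy_add (Xv 0) = Xv 0 := by
  rw [reindexHom_apply, Xv_eq 0, reindex_monomial fxy_inj, fxy_single0]

lemma fxy_single1 : fxy (Finsupp.single 1 1) = Finsupp.single 0 1 + Finsupp.single 1 1 := by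
  ext i
  fin_cases i <;> simp [fxy, mon, Finsupp.single_apply]

lemma fyx_single1 : fyx (Finsupp.single 1 1) = Finsupp.single 0 1 + Finsupp.single 1 1 := by
  ext i
  fin_cases i <;> simp [fyx, mon, Finsupp.single_apply]

lemma Rxy_X1 : reindexHom fxy fxy_inj fxy_add (Xv 1) = Xv 0 * Xv 1 := by
  rw [reindexHom_apply, Xv_eq 1, reindex_monomial fxy_inj, fxy_single1, Xv_eq 0,
    MvPowerSeries.monomial_mul_monomial, one_mul]

lemma Ryx_X0 : reindexHom fyx fyx_inj fyx_add (Xv 0) = Xv 1 := by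
  rw [reindexHom_apply, Xv_eq 0, reindex_monomial fyx_inj, fyx_single0, Xv_eq 1]

lemma Ryx_X1 : reindexHom fyx fyx_inj fyx_add (Xv 1) = Xv 0 * Xv 1 := by
  rw [reindexHom_apply, Xv_eq 1, reindex_monomial fyx_inj, fyx_single1, Xv_eq 0,
    MvPowerSeries.monomial_mul_monomial, one_mul]

lemma subst2_eq_xy (h : Q2) :
    subst2 (Xv 0) (Xv 0 * Xv 1) h = reindexHom fxy fxy_inj fxy_add h := by
  rw [reindexHom_apply]
  refine subst2_eq_reindex _ _ fxy_inj pow_mul_pow_xy ?_ h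
  intro d
  simp only [fxy, mon_apply0, mon_apply1]
  omega

lemma subst2_eq_yx (h : Q2) :
    subst2 (Xv 1) (Xv 0 * Xv 1) h = reindexHom fyx fyx_inj fyx_add h := by
  rw [reindexHom_apply]
  refine subst2_eq_reindex _ _ fyx_inj pow_mul_pow_yx ?_ h
  intro d
  simp only [fyx, mon_apply0, mon_apply1]
  omega

lemma rearr {x y Dd E1 E2 N1 N2 S1 S2 H : Q2} (hH : Dd * H = 1)
    (h1 : S1 * E1 = N1) (h2 : S2 * E2 = N2)
    (hkey : Dd * (E1 * E2) ≠ 0)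
    (P : (x - y) * (E1 * E2) = x * N1 * E2 * Dd - y * N2 * E1 * Dd) :
    (x - y) * H = x * S1 - y * S2 := by
  apply mul_left_cancel₀ hkey
  calc Dd * (E1 * E2) * ((x - y) * H)
      = (Dd * H) * ((x - y) * (E1 * E2)) := by ring
    _ = (x - y) * (E1 * E2) := by rw [hH, one_mul]
    _ = x * N1 * E2 * Dd - y * N2 * E1 * Dd := P
    _ = x * (S1 * E1) * E2 * Dd - y * (S2 * E2) * E1 * Dd := by rw [h1, h2]
    _ = Dd * (E1 * E2) * (x * S1 - y * S2) := by ring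

end Aux

/-- Theorem 2, identity form via equation (2):
(x − y)·H(x,y) = x·W(x,xy) − y·W(y,xy). -/
theorem W_is_multiplicity_series_of_H :
    (Xv 0 - Xv 1) * Hseries
      = Xv 0 * subst2 (Xv 0) (Xv 0 * Xv 1) Wseries
        - Xv 1 * subst2 (Xv 1) (Xv 0 * Xv 1) Wseries := by
  have hcD : (MvPowerSeries.constantCoeff)
      ((1 - Xv 0) ^ 2 * (1 - Xv 1) ^ 2 * (1 - Xv 0 ^ 2) * (1 - Xv 1 ^ 2)
        * (1 - Xv 0 * Xv 1) ^ 2 * (1 - Xv 0 ^ 2 * Xv 1) * (1 - Xv 0 * Xv 1 ^ 2)) ≠ 0 := by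
    simp [Xv]
  have hcE : (MvPowerSeries.constantCoeff)
      ((1 - Xv 1) ^ 7 * (1 + Xv 1) ^ 4 * (1 + Xv 1 ^ 2)
        * (1 - Xv 0) ^ 3 * (1 + Xv 0) * (1 - Xv 1 * Xv 0)) ≠ 0 := by
    simp [Xv]
  have hH : ((1 - Xv 0) ^ 2 * (1 - Xv 1) ^ 2 * (1 - Xv 0 ^ 2) * (1 - Xv 1 ^ 2)
        * (1 - Xv 0 * Xv 1) ^ 2 * (1 - Xv 0 ^ 2 * Xv 1) * (1 - Xv 0 * Xv 1 ^ 2))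
      * Hseries = 1 := by
    rw [Hseries]
    exact MvPowerSeries.mul_inv_cancel _ hcD
  have hW1 : Wseries * ((1 - Xv 1) ^ 7 * (1 + Xv 1) ^ 4 * (1 + Xv 1 ^ 2)
        * (1 - Xv 0) ^ 3 * (1 + Xv 0) * (1 - Xv 1 * Xv 0))
      = (Xv 1 ^ 2 * (Xv 1 ^ 4 - Xv 1 ^ 3 + 3 * Xv 1 ^ 2 - Xv 1 + 1) * Xv 0 ^ 3
          + Xv 1 * (2 * Xv 1 ^ 4 - 4 * Xv 1 ^ 3 + Xv 1 ^ 2 - Xv 1 - 1) * Xv 0 ^ 2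
          + Xv 1 * (-Xv 1 ^ 4 - Xv 1 ^ 3 + Xv 1 ^ 2 - 4 * Xv 1 + 2) * Xv 0
          + (Xv 1 ^ 4 - Xv 1 ^ 3 + 3 * Xv 1 ^ 2 - Xv 1 + 1)) := by
    rw [Wseries, mul_assoc, MvPowerSeries.inv_mul_cancel _ hcE, mul_one]
  have h1 := congrArg (reindexHom fxy fxy_inj fxy_add) hW1
  have h2 := congrArg (reindexHom fyx fyx_inj fyx_add) hW1
  simp only [map_mul, map_pow, map_add, map_sub, map_one, map_neg, map_ofNat,
    Rxy_X0, Rxy_X1] at h1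
  simp only [map_mul, map_pow, map_add, map_sub, map_one, map_neg, map_ofNat,
    Ryx_X0, Ryx_X1] at h2
  rw [subst2_eq_xy, subst2_eq_yx]
  refine rearr hH h1 h2 ?_ ?_
  · intro hzero
    have hc := congrArg (MvPowerSeries.constantCoeff) hzero
    simp [Xv] at hc
  · ring
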